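/- Let G₁ and G₂ be vertex-disjoint (2,2)-circuits, let v_i be a degree-3 vertex of G_i with neighbourhood {a_i, b_i, c_i} for i = 1,2, and let G be the 3-join: the graph on (V(G₁) - v₁) ∪ (V(G₂) - v₂) with edge set (E(G₁) ∪ E(G₂)) minus the six edges incident to v₁ or v₂, plus the three new edges a₁a₂, b₁b₂, c₁c₂. Then G is a (2,2)-circuit. -/

import Mathlib

/-- A graph `G` on the finite vertex type `V` is a `(2,2)`-circuit if
`|E| = 2|V| - 1` and every proper subgraph `(V',E')` with `E'` nonempty
satisfies `|E'| ≤ 2|V'| - 2`. -/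
def IsCircuit22 {V : Type*} [Fintype V] (G : SimpleGraph V) : Prop :=
  G.edgeSet.ncard + 1 = 2 * Fintype.card V ∧
  ∀ H : G.Subgraph, (H.verts ≠ Set.univ ∨ H.edgeSet ≠ G.edgeSet) →
    H.edgeSet.Nonempty → H.edgeSet.ncard + 2 ≤ 2 * H.verts.ncard

/-- The adjacency relation of the 3-join of `(G₁, G₂)` (before removing the
deleted vertices `v₁, v₂`): edges within each side are kept, and the former
neighbourhoods `{a₁,b₁,c₁}` and `{a₂,b₂,c₂}` are joined by a perfect matching. -/
def joinAdj {V₁ V₂ : Type*} (G₁ : SimpleGraph V₁) (G₂ : SimpleGraph V₂)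
    (a₁ b₁ c₁ : V₁) (a₂ b₂ c₂ : V₂) : V₁ ⊕ V₂ → V₁ ⊕ V₂ → Prop
  | Sum.inl x, Sum.inl y => G₁.Adj x y
  | Sum.inr x, Sum.inr y => G₂.Adj x y
  | Sum.inl x, Sum.inr y => (x = a₁ ∧ y = a₂) ∨ (x = b₁ ∧ y = b₂) ∨ (x = c₁ ∧ y = c₂)
  | Sum.inr x, Sum.inl y => (y = a₁ ∧ x = a₂) ∨ (y = b₁ ∧ x = b₂) ∨ (y = c₁ ∧ x = c₂)

open Set Function

namespace ThreeJoinAux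

open scoped Classical in
lemma triple_ncard {α : Type*} (P Q R : Prop) (x y z : α)
    (hxy : x ≠ y) (hxz : x ≠ z) (hyz : y ≠ z) :
    ({t | (t = x ∧ P) ∨ (t = y ∧ Q) ∨ (t = z ∧ R)} : Set α).ncard =
      (if P then 1 else 0) + (if Q then 1 else 0) + (if R then 1 else 0) := by
  by_cases hP : P <;> by_cases hQ : Q <;> by_cases hR : R <;>
    simp only [hP, hQ, hR, and_true, and_false, false_or, or_false, if_true, if_false,
      iff_true, iff_false, eq_self_iff_true, not_false_iff, if_pos trivial]
  · rw [show {t | t = x ∨ t = y ∨ t = z} = ({x, y, z} : Set α) from rfl,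
      Set.ncard_insert_of_notMem (by simp [hxy, hxz]),
      Set.ncard_insert_of_notMem (by simp [hyz]), Set.ncard_singleton]
  · rw [show {t | t = x ∨ t = y} = ({x, y} : Set α) from rfl, Set.ncard_pair hxy]
  · rw [show {t | t = x ∨ t = z} = ({x, z} : Set α) from rfl, Set.ncard_pair hxz]
  · rw [show {t | t = x} = ({x} : Set α) from rfl, Set.ncard_singleton]
  · rw [show {t | t = y ∨ t = z} = ({y, z} : Set α) from rfl, Set.ncard_pair hyz]
  · rw [show {t | t = y} = ({y} : Set α) from rfl, Set.ncard_singleton]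
  · rw [show {t | t = z} = ({z} : Set α) from rfl, Set.ncard_singleton]
  · simp

/-- counting edges at a degree-3 vertex -/
lemma star_count {V : Type*} [Fintype V] (G : SimpleGraph V) {v a b c : V}
    (hn : G.neighborSet v = {a, b, c}) (hab : a ≠ b) (hac : a ≠ c) (hbc : b ≠ c) :
    {e ∈ G.edgeSet | v ∉ e}.ncard + 3 = G.edgeSet.ncard := by
  have hva : G.Adj v a := by
    have : a ∈ G.neighborSet v := by rw [hn]; simp
    exact this
  have hvb : G.Adj v b := by
    have : b ∈ G.neighborSet v := by rw [hn]; simp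
    exact this
  have hvc : G.Adj v c := by
    have : c ∈ G.neighborSet v := by rw [hn]; simp
    exact this
  have hstar : {e ∈ G.edgeSet | v ∈ e} =
      {e | (e = s(v, a) ∧ True) ∨ (e = s(v, b) ∧ True) ∨ (e = s(v, c) ∧ True)} := by
    ext e
    obtain ⟨⟨x, y⟩, rfl⟩ := e.exists_rep
    constructor
    · rintro ⟨he, hv⟩
      rw [Sym2.mem_iff] at hv
      have key : ∀ z : V, G.Adj v z → (s(v, z) = s(v, a) ∧ True) ∨
          (s(v, z) = s(v, b) ∧ True) ∨ (s(v, z) = s(v, c) ∧ True) := by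
        intro z hz
        have : z ∈ G.neighborSet v := hz
        rw [hn] at this
        rcases this with h | h | h <;> subst h <;> simp
      rcases hv with rfl | rfl
      · exact key y he
      · simp only [Set.mem_setOf_eq]
        rcases key x he.symm with ⟨h, -⟩ | ⟨h, -⟩ | ⟨h, -⟩
        · exact Or.inl ⟨Sym2.eq_swap.trans h, trivial⟩
        · exact Or.inr (Or.inl ⟨Sym2.eq_swap.trans h, trivial⟩)
        · exact Or.inr (Or.inr ⟨Sym2.eq_swap.trans h, trivial⟩)
    · rintro (⟨h, -⟩ | ⟨h, -⟩ | ⟨h, -⟩) <;> rw [h]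
      · exact ⟨hva, Sym2.mem_mk_left _ _⟩
      · exact ⟨hvb, Sym2.mem_mk_left _ _⟩
      · exact ⟨hvc, Sym2.mem_mk_left _ _⟩
  have hd : {e ∈ G.edgeSet | v ∈ e}.ncard = 3 := by
    rw [hstar, triple_ncard]
    · simp
    · rw [Ne, Sym2.eq_iff]
      push_neg
      exact ⟨fun _ => hab, fun _ h' => hva.ne h'.symm⟩
    · rw [Ne, Sym2.eq_iff]
      push_neg
      exact ⟨fun _ => hac, fun _ h' => hva.ne h'.symm⟩
    · rw [Ne, Sym2.eq_iff]
      push_neg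
      exact ⟨fun _ => hbc, fun _ h' => hvb.ne h'.symm⟩
  have hsplit : G.edgeSet = {e ∈ G.edgeSet | v ∉ e} ∪ {e ∈ G.edgeSet | v ∈ e} := by
    ext e
    constructor
    · intro he
      by_cases hv : v ∈ e
      exacts [Or.inr ⟨he, hv⟩, Or.inl ⟨he, hv⟩]
    · rintro (⟨he, -⟩ | ⟨he, -⟩) <;> exact he
  rw [← hd, ← Set.ncard_union_eq (by
      rw [Set.disjoint_left]; rintro e ⟨-, h1⟩ ⟨-, h2⟩; exact h1 h2)
    (Set.toFinite _) (Set.toFinite _), ← hsplit]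


lemma star_ne {V : Type*} {v a b : V} (hb : b ≠ v) (hab : a ≠ b) :
    s(v, a) ≠ s(v, b) := by
  rw [Ne, Sym2.eq_iff]
  push_neg
  exact ⟨fun _ => hab, fun h => absurd h.symm hb⟩

lemma exists_inr {α β : Type*} {s : α ⊕ β} (h : s.isLeft = false) :
    ∃ x, s = Sum.inr x := by cases s <;> simp_all

lemma sym2Bool (z : Sym2 Bool) :
    z = s(true, true) ∨ z = s(false, false) ∨ z = s(true, false) := by
  induction z using Sym2.ind with
  | _ x y => cases x <;> cases y <;> simp [Sym2.eq_swap]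

lemma ncard_eq_of_image_eq {α β γ : Type*} {f : α → γ} {g : β → γ}
    (hf : Injective f) (hg : Injective g) {s : Set α} {t : Set β}
    (h : f '' s = g '' t) : s.ncard = t.ncard := by
  rw [← Set.ncard_image_of_injective s hf, h, Set.ncard_image_of_injective t hg]

section Join
variable {V₁ V₂ : Type*} [Fintype V₁] [Fintype V₂] (G₁ : SimpleGraph V₁) (G₂ : SimpleGraph V₂)
  {v₁ a₁ b₁ c₁ : V₁} {v₂ a₂ b₂ c₂ : V₂}

/-- vertices of the join -/
abbrev JV (v₁ : V₁) (v₂ : V₂) : Type _ :=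
  {w : V₁ ⊕ V₂ // w ≠ Sum.inl v₁ ∧ w ≠ Sum.inr v₂}

def jvl (v₂ : V₂) (x : V₁) (hx : x ≠ v₁) : JV v₁ v₂ :=
  ⟨Sum.inl x, by simp [hx], by simp⟩

def jvr (v₁ : V₁) (x : V₂) (hx : x ≠ v₂) : JV v₁ v₂ :=
  ⟨Sum.inr x, by simp, by simp [hx]⟩

variable (G : SimpleGraph (JV v₁ v₂))

/-- edges of a subgraph of the join with both ends on the left -/
def FL (H : G.Subgraph) : Set (Sym2 (JV v₁ v₂)) :=
  {e ∈ H.edgeSet | Sym2.map (fun w : JV v₁ v₂ => w.1.isLeft) e = s(true, true)}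

def FR (H : G.Subgraph) : Set (Sym2 (JV v₁ v₂)) :=
  {e ∈ H.edgeSet | Sym2.map (fun w : JV v₁ v₂ => w.1.isLeft) e = s(false, false)}

def FM (H : G.Subgraph) : Set (Sym2 (JV v₁ v₂)) :=
  {e ∈ H.edgeSet | Sym2.map (fun w : JV v₁ v₂ => w.1.isLeft) e = s(true, false)}

lemma card_decomp (H : G.Subgraph) :
    H.edgeSet.ncard = (FL G H).ncard + (FR G H).ncard + (FM G H).ncard := by
  have hsplit : H.edgeSet = (FL G H ∪ FR G H) ∪ FM G H := by
    ext e
    constructor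
    · intro he
      rcases sym2Bool (Sym2.map (fun w : JV v₁ v₂ => w.1.isLeft) e) with h | h | h
      · exact Or.inl (Or.inl ⟨he, h⟩)
      · exact Or.inl (Or.inr ⟨he, h⟩)
      · exact Or.inr ⟨he, h⟩
    · rintro ((⟨he, -⟩ | ⟨he, -⟩) | ⟨he, -⟩) <;> exact he
  rw [hsplit, Set.ncard_union_eq ?d1 (Set.toFinite _) (Set.toFinite _),
    Set.ncard_union_eq ?d2 (Set.toFinite _) (Set.toFinite _)]
  case d2 =>
    rw [Set.disjoint_left]
    rintro e ⟨-, h1⟩ ⟨-, h2⟩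
    rw [h1] at h2
    exact absurd h2 (by decide)
  case d1 =>
    rw [Set.disjoint_left]
    rintro e (⟨-, h1⟩ | ⟨-, h1⟩) ⟨-, h2⟩ <;> rw [h1] at h2 <;> exact absurd h2 (by decide)

variable (hG : ∀ u w : JV v₁ v₂, G.Adj u w ↔ joinAdj G₁ G₂ a₁ b₁ c₁ a₂ b₂ c₂ u.1 w.1)

/-- the subgraph of `G₁` induced by a subgraph of the join (left part). -/
def leftSub (H : G.Subgraph) : G₁.Subgraph where
  verts := Sum.inl ⁻¹' (Subtype.val '' H.verts)
  Adj x y := ∃ u w : JV v₁ v₂, u.1 = Sum.inl x ∧ w.1 = Sum.inl y ∧ H.Adj u w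
  adj_sub := by
    rintro x y ⟨u, w, hu, hw, h⟩
    have h2 := (hG u w).1 h.adj_sub
    rw [hu, hw] at h2
    exact h2
  edge_vert := by
    rintro x y ⟨u, w, hu, hw, h⟩
    exact ⟨u, h.fst_mem, hu⟩
  symm := by
    constructor
    rintro x y ⟨u, w, hu, hw, h⟩
    exact ⟨w, u, hw, hu, h.symm⟩

def rightSub (H : G.Subgraph) : G₂.Subgraph where
  verts := Sum.inr ⁻¹' (Subtype.val '' H.verts)
  Adj x y := ∃ u w : JV v₁ v₂, u.1 = Sum.inr x ∧ w.1 = Sum.inr y ∧ H.Adj u w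
  adj_sub := by
    rintro x y ⟨u, w, hu, hw, h⟩
    have h2 := (hG u w).1 h.adj_sub
    rw [hu, hw] at h2
    exact h2
  edge_vert := by
    rintro x y ⟨u, w, hu, hw, h⟩
    exact ⟨u, h.fst_mem, hu⟩
  symm := by
    constructor
    rintro x y ⟨u, w, hu, hw, h⟩
    exact ⟨w, u, hw, hu, h.symm⟩

lemma image_FL (H : G.Subgraph) :
    Sym2.map Subtype.val '' FL G H =
      Sym2.map Sum.inl '' (leftSub G₁ G₂ G hG H).edgeSet := by
  ext e
  constructor
  · rintro ⟨e', ⟨he', hb⟩, rfl⟩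
    obtain ⟨⟨u, w⟩, rfl⟩ := e'.exists_rep
    rw [Sym2.map_pair_eq, Sym2.eq_iff] at hb
    have hb' : u.1.isLeft = true ∧ w.1.isLeft = true := by tauto
    obtain ⟨x, hx⟩ := Sum.isLeft_iff.1 hb'.1
    obtain ⟨y, hy⟩ := Sum.isLeft_iff.1 hb'.2
    refine ⟨s(x, y), ⟨u, w, hx, hy, he'⟩, ?_⟩
    rw [Sym2.map_pair_eq, Sym2.map_pair_eq, hx, hy]
  · rintro ⟨e', he', rfl⟩
    obtain ⟨⟨x, y⟩, rfl⟩ := e'.exists_rep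
    obtain ⟨u, w, hu, hw, h⟩ := he'
    refine ⟨s(u, w), ⟨h, ?_⟩, ?_⟩
    · rw [Sym2.map_pair_eq, hu, hw]
      rfl
    · rw [Sym2.map_pair_eq, Sym2.map_pair_eq, hu, hw]

lemma image_FR (H : G.Subgraph) :
    Sym2.map Subtype.val '' FR G H =
      Sym2.map Sum.inr '' (rightSub G₁ G₂ G hG H).edgeSet := by
  ext e
  constructor
  · rintro ⟨e', ⟨he', hb⟩, rfl⟩
    obtain ⟨⟨u, w⟩, rfl⟩ := e'.exists_rep
    rw [Sym2.map_pair_eq, Sym2.eq_iff] at hb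
    have hb' : u.1.isLeft = false ∧ w.1.isLeft = false := by tauto
    obtain ⟨x, hx⟩ := exists_inr hb'.1
    obtain ⟨y, hy⟩ := exists_inr hb'.2
    refine ⟨s(x, y), ⟨u, w, hx, hy, he'⟩, ?_⟩
    rw [Sym2.map_pair_eq, Sym2.map_pair_eq, hx, hy]
  · rintro ⟨e', he', rfl⟩
    obtain ⟨⟨x, y⟩, rfl⟩ := e'.exists_rep
    obtain ⟨u, w, hu, hw, h⟩ := he'
    refine ⟨s(u, w), ⟨h, ?_⟩, ?_⟩
    · rw [Sym2.map_pair_eq, hu, hw]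
      rfl
    · rw [Sym2.map_pair_eq, Sym2.map_pair_eq, hu, hw]

lemma FL_ncard (H : G.Subgraph) : (FL G H).ncard = (leftSub G₁ G₂ G hG H).edgeSet.ncard :=
  ncard_eq_of_image_eq (Sym2.map.injective Subtype.val_injective)
    (Sym2.map.injective Sum.inl_injective) (image_FL G₁ G₂ G hG H)

lemma FR_ncard (H : G.Subgraph) : (FR G H).ncard = (rightSub G₁ G₂ G hG H).edgeSet.ncard :=
  ncard_eq_of_image_eq (Sym2.map.injective Subtype.val_injective)
    (Sym2.map.injective Sum.inr_injective) (image_FR G₁ G₂ G hG H)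

lemma verts_split (H : G.Subgraph) :
    H.verts.ncard =
      (leftSub G₁ G₂ G hG H).verts.ncard + (rightSub G₁ G₂ G hG H).verts.ncard := by
  have h1 : H.verts.ncard = (Subtype.val '' H.verts).ncard :=
    (Set.ncard_image_of_injective _ Subtype.val_injective).symm
  have hS : Subtype.val '' H.verts =
      Sum.inl '' (leftSub G₁ G₂ G hG H).verts ∪ Sum.inr '' (rightSub G₁ G₂ G hG H).verts := by
    apply subset_antisymm
    · rintro s ⟨⟨val, prop⟩, hu, rfl⟩
      cases val with
      | inl x => exact Or.inl ⟨x, ⟨⟨Sum.inl x, prop⟩, hu, rfl⟩, rfl⟩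
      | inr x => exact Or.inr ⟨x, ⟨⟨Sum.inr x, prop⟩, hu, rfl⟩, rfl⟩
    · rintro s (⟨x, hx, rfl⟩ | ⟨x, hx, rfl⟩)
      · exact hx
      · exact hx
  rw [h1, hS, Set.ncard_union_eq ?dd (Set.toFinite _) (Set.toFinite _),
    Set.ncard_image_of_injective _ Sum.inl_injective,
    Set.ncard_image_of_injective _ Sum.inr_injective]
  case dd =>
    rw [Set.disjoint_left]
    rintro s ⟨x, -, rfl⟩ ⟨y, -, h⟩
    exact absurd h (by simp)


variable (ha₁ : a₁ ≠ v₁) (hb₁ : b₁ ≠ v₁) (hc₁ : c₁ ≠ v₁)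
  (ha₂ : a₂ ≠ v₂) (hb₂ : b₂ ≠ v₂) (hc₂ : c₂ ≠ v₂)

include hG in
lemma FM_eq (H : G.Subgraph) : FM G H =
    {e | (e = s(jvl v₂ a₁ ha₁, jvr v₁ a₂ ha₂) ∧ H.Adj (jvl v₂ a₁ ha₁) (jvr v₁ a₂ ha₂)) ∨
      (e = s(jvl v₂ b₁ hb₁, jvr v₁ b₂ hb₂) ∧ H.Adj (jvl v₂ b₁ hb₁) (jvr v₁ b₂ hb₂)) ∨
      (e = s(jvl v₂ c₁ hc₁, jvr v₁ c₂ hc₂) ∧ H.Adj (jvl v₂ c₁ hc₁) (jvr v₁ c₂ hc₂))} := by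
  have key : ∀ u w : JV v₁ v₂, H.Adj u w → u.1.isLeft = true → w.1.isLeft = false →
      (s(u, w) = s(jvl v₂ a₁ ha₁, jvr v₁ a₂ ha₂) ∧ H.Adj (jvl v₂ a₁ ha₁) (jvr v₁ a₂ ha₂)) ∨
      (s(u, w) = s(jvl v₂ b₁ hb₁, jvr v₁ b₂ hb₂) ∧ H.Adj (jvl v₂ b₁ hb₁) (jvr v₁ b₂ hb₂)) ∨
      (s(u, w) = s(jvl v₂ c₁ hc₁, jvr v₁ c₂ hc₂) ∧ H.Adj (jvl v₂ c₁ hc₁) (jvr v₁ c₂ hc₂)) := by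
    intro u w h hu hw
    obtain ⟨x, hx⟩ := Sum.isLeft_iff.1 hu
    obtain ⟨y, hy⟩ := exists_inr hw
    have hj := (hG u w).1 h.adj_sub
    rw [hx, hy] at hj
    have hj' : (x = a₁ ∧ y = a₂) ∨ (x = b₁ ∧ y = b₂) ∨ (x = c₁ ∧ y = c₂) := hj
    rcases hj' with ⟨h1, h2⟩ | ⟨h1, h2⟩ | ⟨h1, h2⟩
    · have hu' : u = jvl v₂ a₁ ha₁ := Subtype.ext (by rw [hx, h1]; rfl)
      have hw' : w = jvr v₁ a₂ ha₂ := Subtype.ext (by rw [hy, h2]; rfl)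
      rw [hu', hw'] at h ⊢
      exact Or.inl ⟨rfl, h⟩
    · have hu' : u = jvl v₂ b₁ hb₁ := Subtype.ext (by rw [hx, h1]; rfl)
      have hw' : w = jvr v₁ b₂ hb₂ := Subtype.ext (by rw [hy, h2]; rfl)
      rw [hu', hw'] at h ⊢
      exact Or.inr (Or.inl ⟨rfl, h⟩)
    · have hu' : u = jvl v₂ c₁ hc₁ := Subtype.ext (by rw [hx, h1]; rfl)
      have hw' : w = jvr v₁ c₂ hc₂ := Subtype.ext (by rw [hy, h2]; rfl)
      rw [hu', hw'] at h ⊢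
      exact Or.inr (Or.inr ⟨rfl, h⟩)
  ext e
  constructor
  · rintro ⟨he, hb⟩
    obtain ⟨⟨u, w⟩, rfl⟩ := e.exists_rep
    rw [Sym2.map_pair_eq, Sym2.eq_iff] at hb
    have he' : H.Adj u w := he
    rcases hb with ⟨hu, hw⟩ | ⟨hu, hw⟩
    · exact key u w he' hu hw
    · have := key w u he'.symm hw hu
      rwa [show (s(w, u) : Sym2 (JV v₁ v₂)) = s(u, w) from Sym2.eq_swap] at this
  · rintro (⟨h, hadj⟩ | ⟨h, hadj⟩ | ⟨h, hadj⟩) <;> rw [h] <;>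
      exact ⟨hadj, by rw [Sym2.map_pair_eq]; rfl⟩

/-- the three matching edges are distinct -/
lemma match_ne_ab (hab : a₁ ≠ b₁) :
    s(jvl (v₁ := v₁) v₂ a₁ ha₁, jvr v₁ a₂ ha₂) ≠ s(jvl v₂ b₁ hb₁, jvr v₁ b₂ hb₂) := by
  simp only [Ne, Sym2.eq_iff, Subtype.ext_iff, jvl, jvr]
  push_neg
  refine ⟨fun h => absurd (Sum.inl.inj h) hab, fun h => ?_⟩
  exact absurd h (by simp)

lemma match_ne_ac (hac : a₁ ≠ c₁) :
    s(jvl (v₁ := v₁) v₂ a₁ ha₁, jvr v₁ a₂ ha₂) ≠ s(jvl v₂ c₁ hc₁, jvr v₁ c₂ hc₂) := by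
  simp only [Ne, Sym2.eq_iff, Subtype.ext_iff, jvl, jvr]
  push_neg
  refine ⟨fun h => absurd (Sum.inl.inj h) hac, fun h => ?_⟩
  exact absurd h (by simp)

lemma match_ne_bc (hbc : b₁ ≠ c₁) :
    s(jvl (v₁ := v₁) v₂ b₁ hb₁, jvr v₁ b₂ hb₂) ≠ s(jvl v₂ c₁ hc₁, jvr v₁ c₂ hc₂) := by
  simp only [Ne, Sym2.eq_iff, Subtype.ext_iff, jvl, jvr]
  push_neg
  refine ⟨fun h => absurd (Sum.inl.inj h) hbc, fun h => ?_⟩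
  exact absurd h (by simp)


lemma leftSub_not_adj (H : G.Subgraph) (y : V₁) : ¬ (leftSub G₁ G₂ G hG H).Adj v₁ y := by
  rintro ⟨u, w, hu, hw, h⟩
  exact u.2.1 hu

lemma rightSub_not_adj (H : G.Subgraph) (y : V₂) : ¬ (rightSub G₁ G₂ G hG H).Adj v₂ y := by
  rintro ⟨u, w, hu, hw, h⟩
  exact u.2.2 hu

lemma leftSub_edgeSet_ne (hva : G₁.Adj v₁ a₁) (H : G.Subgraph) :
    (leftSub G₁ G₂ G hG H).edgeSet ≠ G₁.edgeSet := by
  intro h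
  have : s(v₁, a₁) ∈ (leftSub G₁ G₂ G hG H).edgeSet := by rw [h]; exact hva
  exact leftSub_not_adj G₁ G₂ G hG H a₁ this

lemma rightSub_edgeSet_ne (hva : G₂.Adj v₂ a₂) (H : G.Subgraph) :
    (rightSub G₁ G₂ G hG H).edgeSet ≠ G₂.edgeSet := by
  intro h
  have : s(v₂, a₂) ∈ (rightSub G₁ G₂ G hG H).edgeSet := by rw [h]; exact hva
  exact rightSub_not_adj G₁ G₂ G hG H a₂ this

lemma v₁_not_mem_leftSub (H : G.Subgraph) : v₁ ∉ (leftSub G₁ G₂ G hG H).verts := by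
  rintro ⟨u, -, hu⟩
  exact u.2.1 hu

lemma v₂_not_mem_rightSub (H : G.Subgraph) : v₂ ∉ (rightSub G₁ G₂ G hG H).verts := by
  rintro ⟨u, -, hu⟩
  exact u.2.2 hu

variable (hva : G₁.Adj v₁ a₁) (hvb : G₁.Adj v₁ b₁) (hvc : G₁.Adj v₁ c₁)
  (hva' : G₂.Adj v₂ a₂) (hvb' : G₂.Adj v₂ b₂) (hvc' : G₂.Adj v₂ c₂)

/-- the subgraph of `G₁` induced by a subgraph of the join, with `v₁` added back
  for each matching edge present. -/
def leftFull (H : G.Subgraph) : G₁.Subgraph where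
  verts := insert v₁ (leftSub G₁ G₂ G hG H).verts
  Adj x y := (leftSub G₁ G₂ G hG H).Adj x y
    ∨ (x = v₁ ∧ ((y = a₁ ∧ H.Adj (jvl v₂ a₁ ha₁) (jvr v₁ a₂ ha₂)) ∨
        (y = b₁ ∧ H.Adj (jvl v₂ b₁ hb₁) (jvr v₁ b₂ hb₂)) ∨
        (y = c₁ ∧ H.Adj (jvl v₂ c₁ hc₁) (jvr v₁ c₂ hc₂))))
    ∨ (y = v₁ ∧ ((x = a₁ ∧ H.Adj (jvl v₂ a₁ ha₁) (jvr v₁ a₂ ha₂)) ∨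
        (x = b₁ ∧ H.Adj (jvl v₂ b₁ hb₁) (jvr v₁ b₂ hb₂)) ∨
        (x = c₁ ∧ H.Adj (jvl v₂ c₁ hc₁) (jvr v₁ c₂ hc₂))))
  adj_sub := by
    rintro x y (h | ⟨rfl, (⟨rfl, -⟩ | ⟨rfl, -⟩ | ⟨rfl, -⟩)⟩ | ⟨rfl, (⟨rfl, -⟩ | ⟨rfl, -⟩ | ⟨rfl, -⟩)⟩)
    · exact (leftSub G₁ G₂ G hG H).adj_sub h
    · exact hva
    · exact hvb
    · exact hvc
    · exact hva.symm
    · exact hvb.symm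
    · exact hvc.symm
  edge_vert := by
    rintro x y (h | ⟨rfl, -⟩ | ⟨rfl, (⟨hxa, pa⟩ | ⟨hxa, pb⟩ | ⟨hxa, pc⟩)⟩)
    · exact Set.mem_insert_of_mem _ ((leftSub G₁ G₂ G hG H).edge_vert h)
    · exact Set.mem_insert _ _
    · exact Set.mem_insert_of_mem _ ⟨jvl v₂ a₁ ha₁, pa.fst_mem, by rw [hxa]; rfl⟩
    · exact Set.mem_insert_of_mem _ ⟨jvl v₂ b₁ hb₁, pb.fst_mem, by rw [hxa]; rfl⟩
    · exact Set.mem_insert_of_mem _ ⟨jvl v₂ c₁ hc₁, pc.fst_mem, by rw [hxa]; rfl⟩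
  symm := by
    constructor
    rintro x y (h | ⟨h1, h2⟩ | ⟨h1, h2⟩)
    · exact Or.inl h.symm
    · exact Or.inr (Or.inr ⟨h1, h2⟩)
    · exact Or.inr (Or.inl ⟨h1, h2⟩)

def rightFull (H : G.Subgraph) : G₂.Subgraph where
  verts := insert v₂ (rightSub G₁ G₂ G hG H).verts
  Adj x y := (rightSub G₁ G₂ G hG H).Adj x y
    ∨ (x = v₂ ∧ ((y = a₂ ∧ H.Adj (jvl v₂ a₁ ha₁) (jvr v₁ a₂ ha₂)) ∨
        (y = b₂ ∧ H.Adj (jvl v₂ b₁ hb₁) (jvr v₁ b₂ hb₂)) ∨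
        (y = c₂ ∧ H.Adj (jvl v₂ c₁ hc₁) (jvr v₁ c₂ hc₂))))
    ∨ (y = v₂ ∧ ((x = a₂ ∧ H.Adj (jvl v₂ a₁ ha₁) (jvr v₁ a₂ ha₂)) ∨
        (x = b₂ ∧ H.Adj (jvl v₂ b₁ hb₁) (jvr v₁ b₂ hb₂)) ∨
        (x = c₂ ∧ H.Adj (jvl v₂ c₁ hc₁) (jvr v₁ c₂ hc₂))))
  adj_sub := by
    rintro x y (h | ⟨rfl, (⟨rfl, -⟩ | ⟨rfl, -⟩ | ⟨rfl, -⟩)⟩ | ⟨rfl, (⟨rfl, -⟩ | ⟨rfl, -⟩ | ⟨rfl, -⟩)⟩)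
    · exact (rightSub G₁ G₂ G hG H).adj_sub h
    · exact hva'
    · exact hvb'
    · exact hvc'
    · exact hva'.symm
    · exact hvb'.symm
    · exact hvc'.symm
  edge_vert := by
    rintro x y (h | ⟨rfl, -⟩ | ⟨rfl, (⟨hxa, pa⟩ | ⟨hxa, pb⟩ | ⟨hxa, pc⟩)⟩)
    · exact Set.mem_insert_of_mem _ ((rightSub G₁ G₂ G hG H).edge_vert h)
    · exact Set.mem_insert _ _
    · exact Set.mem_insert_of_mem _ ⟨jvr v₁ a₂ ha₂, pa.snd_mem, by rw [hxa]; rfl⟩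
    · exact Set.mem_insert_of_mem _ ⟨jvr v₁ b₂ hb₂, pb.snd_mem, by rw [hxa]; rfl⟩
    · exact Set.mem_insert_of_mem _ ⟨jvr v₁ c₂ hc₂, pc.snd_mem, by rw [hxa]; rfl⟩
  symm := by
    constructor
    rintro x y (h | ⟨h1, h2⟩ | ⟨h1, h2⟩)
    · exact Or.inl h.symm
    · exact Or.inr (Or.inr ⟨h1, h2⟩)
    · exact Or.inr (Or.inl ⟨h1, h2⟩)

lemma leftFull_verts_ncard (H : G.Subgraph) :
    (leftFull G₁ G₂ G hG ha₁ hb₁ hc₁ ha₂ hb₂ hc₂ hva hvb hvc H).verts.ncard =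
      (leftSub G₁ G₂ G hG H).verts.ncard + 1 := by
  exact Set.ncard_insert_of_notMem (v₁_not_mem_leftSub G₁ G₂ G hG H) (Set.toFinite _)

lemma rightFull_verts_ncard (H : G.Subgraph) :
    (rightFull G₁ G₂ G hG ha₁ hb₁ hc₁ ha₂ hb₂ hc₂ hva' hvb' hvc' H).verts.ncard =
      (rightSub G₁ G₂ G hG H).verts.ncard + 1 := by
  exact Set.ncard_insert_of_notMem (v₂_not_mem_rightSub G₁ G₂ G hG H) (Set.toFinite _)



include hG in
lemma leftFull_edge_ncard (hab : a₁ ≠ b₁) (hac : a₁ ≠ c₁) (hbc : b₁ ≠ c₁) (H : G.Subgraph) :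
    (leftFull G₁ G₂ G hG ha₁ hb₁ hc₁ ha₂ hb₂ hc₂ hva hvb hvc H).edgeSet.ncard =
      (leftSub G₁ G₂ G hG H).edgeSet.ncard + (FM G H).ncard := by
  have hsplit : (leftFull G₁ G₂ G hG ha₁ hb₁ hc₁ ha₂ hb₂ hc₂ hva hvb hvc H).edgeSet =
      (leftSub G₁ G₂ G hG H).edgeSet ∪
      {e | (e = s(v₁, a₁) ∧ H.Adj (jvl v₂ a₁ ha₁) (jvr v₁ a₂ ha₂)) ∨
        (e = s(v₁, b₁) ∧ H.Adj (jvl v₂ b₁ hb₁) (jvr v₁ b₂ hb₂)) ∨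
        (e = s(v₁, c₁) ∧ H.Adj (jvl v₂ c₁ hc₁) (jvr v₁ c₂ hc₂))} := by
    ext e
    obtain ⟨⟨x, y⟩, rfl⟩ := e.exists_rep
    simp only [SimpleGraph.Subgraph.mem_edgeSet, Set.mem_union, Set.mem_setOf_eq]
    constructor
    · rintro (h | ⟨rfl, (⟨hy, p⟩ | ⟨hy, p⟩ | ⟨hy, p⟩)⟩ | ⟨rfl, (⟨hx, p⟩ | ⟨hx, p⟩ | ⟨hx, p⟩)⟩)
      · exact Or.inl h
      · exact Or.inr (Or.inl ⟨by rw [hy], p⟩)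
      · exact Or.inr (Or.inr (Or.inl ⟨by rw [hy], p⟩))
      · exact Or.inr (Or.inr (Or.inr ⟨by rw [hy], p⟩))
      · exact Or.inr (Or.inl ⟨by rw [hx]; exact Sym2.eq_swap, p⟩)
      · exact Or.inr (Or.inr (Or.inl ⟨by rw [hx]; exact Sym2.eq_swap, p⟩))
      · exact Or.inr (Or.inr (Or.inr ⟨by rw [hx]; exact Sym2.eq_swap, p⟩))
    · rintro (h | (⟨he, p⟩ | ⟨he, p⟩ | ⟨he, p⟩))
      · exact Or.inl h
      · rw [Sym2.eq_iff] at he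
        rcases he with ⟨h1, h2⟩ | ⟨h1, h2⟩
        · exact Or.inr (Or.inl ⟨h1, Or.inl ⟨h2, p⟩⟩)
        · exact Or.inr (Or.inr ⟨h2, Or.inl ⟨h1, p⟩⟩)
      · rw [Sym2.eq_iff] at he
        rcases he with ⟨h1, h2⟩ | ⟨h1, h2⟩
        · exact Or.inr (Or.inl ⟨h1, Or.inr (Or.inl ⟨h2, p⟩)⟩)
        · exact Or.inr (Or.inr ⟨h2, Or.inr (Or.inl ⟨h1, p⟩)⟩)
      · rw [Sym2.eq_iff] at he
        rcases he with ⟨h1, h2⟩ | ⟨h1, h2⟩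
        · exact Or.inr (Or.inl ⟨h1, Or.inr (Or.inr ⟨h2, p⟩)⟩)
        · exact Or.inr (Or.inr ⟨h2, Or.inr (Or.inr ⟨h1, p⟩)⟩)
  rw [hsplit, Set.ncard_union_eq ?disj (Set.toFinite _) (Set.toFinite _)]
  case disj =>
    rw [Set.disjoint_left]
    rintro e he (⟨hea, -⟩ | ⟨hea, -⟩ | ⟨hea, -⟩) <;> rw [hea] at he
    · exact leftSub_not_adj G₁ G₂ G hG H a₁ he
    · exact leftSub_not_adj G₁ G₂ G hG H b₁ he
    · exact leftSub_not_adj G₁ G₂ G hG H c₁ he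
  congr 1
  rw [FM_eq G₁ G₂ G hG ha₁ hb₁ hc₁ ha₂ hb₂ hc₂ H,
    triple_ncard _ _ _ _ _ _ (star_ne hb₁ hab)
      (star_ne hc₁ hac) (star_ne hc₁ hbc),
    triple_ncard _ _ _ _ _ _
      (match_ne_ab ha₁ hb₁ ha₂ hb₂ hab) (match_ne_ac ha₁ hc₁ ha₂ hc₂ hac)
      (match_ne_bc hb₁ hc₁ hb₂ hc₂ hbc)]


include hG in
lemma rightFull_edge_ncard (hab : a₂ ≠ b₂) (hac : a₂ ≠ c₂) (hbc : b₂ ≠ c₂)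
    (hab₁ : a₁ ≠ b₁) (hac₁ : a₁ ≠ c₁) (hbc₁ : b₁ ≠ c₁) (H : G.Subgraph) :
    (rightFull G₁ G₂ G hG ha₁ hb₁ hc₁ ha₂ hb₂ hc₂ hva' hvb' hvc' H).edgeSet.ncard =
      (rightSub G₁ G₂ G hG H).edgeSet.ncard + (FM G H).ncard := by
  have hsplit : (rightFull G₁ G₂ G hG ha₁ hb₁ hc₁ ha₂ hb₂ hc₂ hva' hvb' hvc' H).edgeSet =
      (rightSub G₁ G₂ G hG H).edgeSet ∪
      {e | (e = s(v₂, a₂) ∧ H.Adj (jvl v₂ a₁ ha₁) (jvr v₁ a₂ ha₂)) ∨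
        (e = s(v₂, b₂) ∧ H.Adj (jvl v₂ b₁ hb₁) (jvr v₁ b₂ hb₂)) ∨
        (e = s(v₂, c₂) ∧ H.Adj (jvl v₂ c₁ hc₁) (jvr v₁ c₂ hc₂))} := by
    ext e
    obtain ⟨⟨x, y⟩, rfl⟩ := e.exists_rep
    simp only [SimpleGraph.Subgraph.mem_edgeSet, Set.mem_union, Set.mem_setOf_eq]
    constructor
    · rintro (h | ⟨rfl, (⟨hy, p⟩ | ⟨hy, p⟩ | ⟨hy, p⟩)⟩ | ⟨rfl, (⟨hx, p⟩ | ⟨hx, p⟩ | ⟨hx, p⟩)⟩)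
      · exact Or.inl h
      · exact Or.inr (Or.inl ⟨by rw [hy], p⟩)
      · exact Or.inr (Or.inr (Or.inl ⟨by rw [hy], p⟩))
      · exact Or.inr (Or.inr (Or.inr ⟨by rw [hy], p⟩))
      · exact Or.inr (Or.inl ⟨by rw [hx]; exact Sym2.eq_swap, p⟩)
      · exact Or.inr (Or.inr (Or.inl ⟨by rw [hx]; exact Sym2.eq_swap, p⟩))
      · exact Or.inr (Or.inr (Or.inr ⟨by rw [hx]; exact Sym2.eq_swap, p⟩))
    · rintro (h | (⟨he, p⟩ | ⟨he, p⟩ | ⟨he, p⟩))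
      · exact Or.inl h
      · rw [Sym2.eq_iff] at he
        rcases he with ⟨h1, h2⟩ | ⟨h1, h2⟩
        · exact Or.inr (Or.inl ⟨h1, Or.inl ⟨h2, p⟩⟩)
        · exact Or.inr (Or.inr ⟨h2, Or.inl ⟨h1, p⟩⟩)
      · rw [Sym2.eq_iff] at he
        rcases he with ⟨h1, h2⟩ | ⟨h1, h2⟩
        · exact Or.inr (Or.inl ⟨h1, Or.inr (Or.inl ⟨h2, p⟩)⟩)
        · exact Or.inr (Or.inr ⟨h2, Or.inr (Or.inl ⟨h1, p⟩)⟩)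
      · rw [Sym2.eq_iff] at he
        rcases he with ⟨h1, h2⟩ | ⟨h1, h2⟩
        · exact Or.inr (Or.inl ⟨h1, Or.inr (Or.inr ⟨h2, p⟩)⟩)
        · exact Or.inr (Or.inr ⟨h2, Or.inr (Or.inr ⟨h1, p⟩)⟩)
  rw [hsplit, Set.ncard_union_eq ?disj (Set.toFinite _) (Set.toFinite _)]
  case disj =>
    rw [Set.disjoint_left]
    rintro e he (⟨hea, -⟩ | ⟨hea, -⟩ | ⟨hea, -⟩) <;> rw [hea] at he
    · exact rightSub_not_adj G₁ G₂ G hG H a₂ he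
    · exact rightSub_not_adj G₁ G₂ G hG H b₂ he
    · exact rightSub_not_adj G₁ G₂ G hG H c₂ he
  congr 1
  rw [FM_eq G₁ G₂ G hG ha₁ hb₁ hc₁ ha₂ hb₂ hc₂ H,
    triple_ncard _ _ _ _ _ _ (star_ne hb₂ hab)
      (star_ne hc₂ hac) (star_ne hc₂ hbc),
    triple_ncard _ _ _ _ _ _
      (match_ne_ab ha₁ hb₁ ha₂ hb₂ hab₁) (match_ne_ac ha₁ hc₁ ha₂ hc₂ hac₁)
      (match_ne_bc hb₁ hc₁ hb₂ hc₂ hbc₁)]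


include hG ha₁ hb₁ hc₁ ha₂ hb₂ hc₂ in
lemma FM_ncard_le (H : G.Subgraph) : (FM G H).ncard ≤ 3 := by
  have hsub : FM G H ⊆ {s(jvl v₂ a₁ ha₁, jvr v₁ a₂ ha₂), s(jvl v₂ b₁ hb₁, jvr v₁ b₂ hb₂),
      s(jvl v₂ c₁ hc₁, jvr v₁ c₂ hc₂)} := by
    rw [FM_eq G₁ G₂ G hG ha₁ hb₁ hc₁ ha₂ hb₂ hc₂ H]
    rintro e (⟨h, -⟩ | ⟨h, -⟩ | ⟨h, -⟩) <;> rw [h] <;> simp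
  calc (FM G H).ncard ≤ _ := Set.ncard_le_ncard hsub (Set.toFinite _)
    _ ≤ 2 + 1 := (Set.ncard_insert_le _ _).trans (by
        gcongr
        exact (Set.ncard_insert_le _ _).trans (by simp))
    _ ≤ 3 := by omega

include hG in
lemma FM_nonempty_cases (H : G.Subgraph) (hne : (FM G H).Nonempty) :
    H.Adj (jvl v₂ a₁ ha₁) (jvr v₁ a₂ ha₂) ∨ H.Adj (jvl v₂ b₁ hb₁) (jvr v₁ b₂ hb₂) ∨
      H.Adj (jvl v₂ c₁ hc₁) (jvr v₁ c₂ hc₂) := by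
  obtain ⟨e, he⟩ := hne
  rw [FM_eq G₁ G₂ G hG ha₁ hb₁ hc₁ ha₂ hb₂ hc₂ H] at he
  rcases he with ⟨-, p⟩ | ⟨-, p⟩ | ⟨-, p⟩
  · exact Or.inl p
  · exact Or.inr (Or.inl p)
  · exact Or.inr (Or.inr p)

include hG in
lemma FM_ncard_of_all (hab : a₁ ≠ b₁) (hac : a₁ ≠ c₁) (hbc : b₁ ≠ c₁) (H : G.Subgraph)
    (pa : H.Adj (jvl v₂ a₁ ha₁) (jvr v₁ a₂ ha₂)) (pb : H.Adj (jvl v₂ b₁ hb₁) (jvr v₁ b₂ hb₂))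
    (pc : H.Adj (jvl v₂ c₁ hc₁) (jvr v₁ c₂ hc₂)) : (FM G H).ncard = 3 := by
  rw [FM_eq G₁ G₂ G hG ha₁ hb₁ hc₁ ha₂ hb₂ hc₂ H,
    triple_ncard _ _ _ _ _ _
      (match_ne_ab ha₁ hb₁ ha₂ hb₂ hab) (match_ne_ac ha₁ hc₁ ha₂ hc₂ hac)
      (match_ne_bc hb₁ hc₁ hb₂ hc₂ hbc), if_pos pa, if_pos pb, if_pos pc]

/-- if the left filled-in subgraph has all edges of `G₁`, all matching edges are in `H`. -/
lemma leftFull_full_match (hab : a₁ ≠ b₁) (hac : a₁ ≠ c₁) (hbc : b₁ ≠ c₁) (H : G.Subgraph)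
    (hfull : (leftFull G₁ G₂ G hG ha₁ hb₁ hc₁ ha₂ hb₂ hc₂ hva hvb hvc H).edgeSet = G₁.edgeSet) :
    H.Adj (jvl v₂ a₁ ha₁) (jvr v₁ a₂ ha₂) ∧ H.Adj (jvl v₂ b₁ hb₁) (jvr v₁ b₂ hb₂) ∧
      H.Adj (jvl v₂ c₁ hc₁) (jvr v₁ c₂ hc₂) := by
  have key : ∀ y : V₁, y ≠ v₁ → G₁.Adj v₁ y →
      (leftFull G₁ G₂ G hG ha₁ hb₁ hc₁ ha₂ hb₂ hc₂ hva hvb hvc H).Adj v₁ y := by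
    intro y hy hadj
    have : s(v₁, y) ∈ (leftFull G₁ G₂ G hG ha₁ hb₁ hc₁ ha₂ hb₂ hc₂ hva hvb hvc H).edgeSet := by
      rw [hfull]; exact hadj
    exact this
  refine ⟨?_, ?_, ?_⟩
  · rcases key a₁ ha₁ hva with h | ⟨-, (⟨-, p⟩ | ⟨h1, -⟩ | ⟨h1, -⟩)⟩ | ⟨h1, -⟩
    · exact absurd h (leftSub_not_adj G₁ G₂ G hG H a₁)
    · exact p
    · simp_all
    · simp_all
    · simp_all
  · rcases key b₁ hb₁ hvb with h | ⟨-, (⟨h1, -⟩ | ⟨-, p⟩ | ⟨h1, -⟩)⟩ | ⟨h1, -⟩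
    · exact absurd h (leftSub_not_adj G₁ G₂ G hG H b₁)
    · simp_all
    · exact p
    · simp_all
    · simp_all
  · rcases key c₁ hc₁ hvc with h | ⟨-, (⟨h1, -⟩ | ⟨h1, -⟩ | ⟨-, p⟩)⟩ | ⟨h1, -⟩
    · exact absurd h (leftSub_not_adj G₁ G₂ G hG H c₁)
    · simp_all
    · simp_all
    · exact p
    · simp_all

lemma rightFull_full_match (hab : a₂ ≠ b₂) (hac : a₂ ≠ c₂) (hbc : b₂ ≠ c₂) (H : G.Subgraph)
    (hfull : (rightFull G₁ G₂ G hG ha₁ hb₁ hc₁ ha₂ hb₂ hc₂ hva' hvb' hvc' H).edgeSet = G₂.edgeSet) :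
    H.Adj (jvl v₂ a₁ ha₁) (jvr v₁ a₂ ha₂) ∧ H.Adj (jvl v₂ b₁ hb₁) (jvr v₁ b₂ hb₂) ∧
      H.Adj (jvl v₂ c₁ hc₁) (jvr v₁ c₂ hc₂) := by
  have key : ∀ y : V₂, y ≠ v₂ → G₂.Adj v₂ y →
      (rightFull G₁ G₂ G hG ha₁ hb₁ hc₁ ha₂ hb₂ hc₂ hva' hvb' hvc' H).Adj v₂ y := by
    intro y hy hadj
    have : s(v₂, y) ∈ (rightFull G₁ G₂ G hG ha₁ hb₁ hc₁ ha₂ hb₂ hc₂ hva' hvb' hvc' H).edgeSet := by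
      rw [hfull]; exact hadj
    exact this
  refine ⟨?_, ?_, ?_⟩
  · rcases key a₂ ha₂ hva' with h | ⟨-, (⟨-, p⟩ | ⟨h1, -⟩ | ⟨h1, -⟩)⟩ | ⟨h1, -⟩
    · exact absurd h (rightSub_not_adj G₁ G₂ G hG H a₂)
    · exact p
    · simp_all
    · simp_all
    · simp_all
  · rcases key b₂ hb₂ hvb' with h | ⟨-, (⟨h1, -⟩ | ⟨-, p⟩ | ⟨h1, -⟩)⟩ | ⟨h1, -⟩
    · exact absurd h (rightSub_not_adj G₁ G₂ G hG H b₂)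
    · simp_all
    · exact p
    · simp_all
    · simp_all
  · rcases key c₂ hc₂ hvc' with h | ⟨-, (⟨h1, -⟩ | ⟨h1, -⟩ | ⟨-, p⟩)⟩ | ⟨h1, -⟩
    · exact absurd h (rightSub_not_adj G₁ G₂ G hG H c₂)
    · simp_all
    · simp_all
    · exact p
    · simp_all

/-- extraction of `H`-adjacencies from a full left subgraph. -/
lemma leftFull_full_adj (H : G.Subgraph)
    (hfull : (leftFull G₁ G₂ G hG ha₁ hb₁ hc₁ ha₂ hb₂ hc₂ hva hvb hvc H).edgeSet = G₁.edgeSet)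
    (u w : JV v₁ v₂) (x y : V₁) (hu : u.1 = Sum.inl x) (hw : w.1 = Sum.inl y)
    (hadj : G₁.Adj x y) : H.Adj u w := by
  have hx : x ≠ v₁ := fun h => u.2.1 (by rw [hu, h])
  have hy : y ≠ v₁ := fun h => w.2.1 (by rw [hw, h])
  have : s(x, y) ∈ (leftFull G₁ G₂ G hG ha₁ hb₁ hc₁ ha₂ hb₂ hc₂ hva hvb hvc H).edgeSet := by
    rw [hfull]; exact hadj
  rcases this with h | ⟨h1, -⟩ | ⟨h1, -⟩
  · obtain ⟨u', w', hu', hw', h'⟩ := h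
    have : u' = u := Subtype.ext (by rw [hu', hu])
    have h2 : w' = w := Subtype.ext (by rw [hw', hw])
    rw [this, h2] at h'
    exact h'
  · exact absurd h1 hx
  · exact absurd h1 hy

lemma rightFull_full_adj (H : G.Subgraph)
    (hfull : (rightFull G₁ G₂ G hG ha₁ hb₁ hc₁ ha₂ hb₂ hc₂ hva' hvb' hvc' H).edgeSet = G₂.edgeSet)
    (u w : JV v₁ v₂) (x y : V₂) (hu : u.1 = Sum.inr x) (hw : w.1 = Sum.inr y)
    (hadj : G₂.Adj x y) : H.Adj u w := by
  have hx : x ≠ v₂ := fun h => u.2.2 (by rw [hu, h])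
  have hy : y ≠ v₂ := fun h => w.2.2 (by rw [hw, h])
  have : s(x, y) ∈ (rightFull G₁ G₂ G hG ha₁ hb₁ hc₁ ha₂ hb₂ hc₂ hva' hvb' hvc' H).edgeSet := by
    rw [hfull]; exact hadj
  rcases this with h | ⟨h1, -⟩ | ⟨h1, -⟩
  · obtain ⟨u', w', hu', hw', h'⟩ := h
    have : u' = u := Subtype.ext (by rw [hu', hu])
    have h2 : w' = w := Subtype.ext (by rw [hw', hw])
    rw [this, h2] at h'
    exact h'
  · exact absurd h1 hx
  · exact absurd h1 hy

/-- extraction of `H`-vertices from full left verts. -/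
lemma leftFull_full_verts (H : G.Subgraph)
    (hfull : (leftFull G₁ G₂ G hG ha₁ hb₁ hc₁ ha₂ hb₂ hc₂ hva hvb hvc H).verts = Set.univ)
    (u : JV v₁ v₂) (x : V₁) (hu : u.1 = Sum.inl x) : u ∈ H.verts := by
  have hx : x ≠ v₁ := fun h => u.2.1 (by rw [hu, h])
  have : x ∈ (leftFull G₁ G₂ G hG ha₁ hb₁ hc₁ ha₂ hb₂ hc₂ hva hvb hvc H).verts := by
    rw [hfull]; trivial
  rcases this with h | ⟨u', hu', hval⟩
  · exact absurd h hx
  · have : u' = u := Subtype.ext (by rw [hval, hu])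
    rwa [this] at hu'

lemma rightFull_full_verts (H : G.Subgraph)
    (hfull : (rightFull G₁ G₂ G hG ha₁ hb₁ hc₁ ha₂ hb₂ hc₂ hva' hvb' hvc' H).verts = Set.univ)
    (u : JV v₁ v₂) (x : V₂) (hu : u.1 = Sum.inr x) : u ∈ H.verts := by
  have hx : x ≠ v₂ := fun h => u.2.2 (by rw [hu, h])
  have : x ∈ (rightFull G₁ G₂ G hG ha₁ hb₁ hc₁ ha₂ hb₂ hc₂ hva' hvb' hvc' H).verts := by
    rw [hfull]; trivial
  rcases this with h | ⟨u', hu', hval⟩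
  · exact absurd h hx
  · have : u' = u := Subtype.ext (by rw [hval, hu])
    rwa [this] at hu'

include hG in
lemma top_left_edgeSet :
    (leftSub G₁ G₂ G hG (⊤ : G.Subgraph)).edgeSet = {e ∈ G₁.edgeSet | v₁ ∉ e} := by
  ext e
  obtain ⟨⟨x, y⟩, rfl⟩ := e.exists_rep
  constructor
  · rintro ⟨u, w, hu, hw, h⟩
    have hj := (hG u w).1 h
    rw [hu, hw] at hj
    have hadj : G₁.Adj x y := hj
    refine ⟨hadj, ?_⟩
    rw [Sym2.mem_iff]
    rintro (rfl | rfl)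
    · exact u.2.1 hu
    · exact w.2.1 hw
  · rintro ⟨hadj, hv⟩
    rw [Sym2.mem_iff] at hv
    push_neg at hv
    have hx : x ≠ v₁ := fun h => hv.1 h.symm
    have hy : y ≠ v₁ := fun h => hv.2 h.symm
    refine ⟨jvl v₂ x hx, jvl v₂ y hy, rfl, rfl, ?_⟩
    show G.Adj _ _
    exact (hG _ _).2 hadj

include hG in
lemma top_right_edgeSet :
    (rightSub G₁ G₂ G hG (⊤ : G.Subgraph)).edgeSet = {e ∈ G₂.edgeSet | v₂ ∉ e} := by
  ext e
  obtain ⟨⟨x, y⟩, rfl⟩ := e.exists_rep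
  constructor
  · rintro ⟨u, w, hu, hw, h⟩
    have hj := (hG u w).1 h
    rw [hu, hw] at hj
    have hadj : G₂.Adj x y := hj
    refine ⟨hadj, ?_⟩
    rw [Sym2.mem_iff]
    rintro (rfl | rfl)
    · exact u.2.2 hu
    · exact w.2.2 hw
  · rintro ⟨hadj, hv⟩
    rw [Sym2.mem_iff] at hv
    push_neg at hv
    have hx : x ≠ v₂ := fun h => hv.1 h.symm
    have hy : y ≠ v₂ := fun h => hv.2 h.symm
    refine ⟨jvr v₁ x hx, jvr v₁ y hy, rfl, rfl, ?_⟩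
    show G.Adj _ _
    exact (hG _ _).2 hadj

include hG ha₁ hb₁ hc₁ ha₂ hb₂ hc₂ in
lemma top_FM_ncard (hab : a₁ ≠ b₁) (hac : a₁ ≠ c₁) (hbc : b₁ ≠ c₁) :
    (FM G (⊤ : G.Subgraph)).ncard = 3 := by
  refine FM_ncard_of_all G₁ G₂ G hG ha₁ hb₁ hc₁ ha₂ hb₂ hc₂ hab hac hbc ⊤ ?_ ?_ ?_
  · show G.Adj _ _
    exact (hG _ _).2 (Or.inl ⟨rfl, rfl⟩)
  · show G.Adj _ _
    exact (hG _ _).2 (Or.inr (Or.inl ⟨rfl, rfl⟩))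
  · show G.Adj _ _
    exact (hG _ _).2 (Or.inr (Or.inr ⟨rfl, rfl⟩))

end Join

lemma card_JV {V₁ V₂ : Type*} [Fintype V₁] [Fintype V₂] [DecidableEq V₁] [DecidableEq V₂]
    (v₁ : V₁) (v₂ : V₂) :
    Fintype.card {w : V₁ ⊕ V₂ // w ≠ Sum.inl v₁ ∧ w ≠ Sum.inr v₂} + 2 =
      Fintype.card V₁ + Fintype.card V₂ := by
  classical
  rw [Fintype.card_subtype]
  have key := Finset.card_filter_add_card_filter_not
    (s := (Finset.univ : Finset (V₁ ⊕ V₂)))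
    (p := fun w => w ≠ Sum.inl v₁ ∧ w ≠ Sum.inr v₂)
  have h2 : (Finset.univ.filter fun w : V₁ ⊕ V₂ => ¬(w ≠ Sum.inl v₁ ∧ w ≠ Sum.inr v₂)) =
      {Sum.inl v₁, Sum.inr v₂} := by
    ext w
    simp [not_and_or, Decidable.not_not, or_comm]
    tauto
  rw [h2] at key
  have h3 : ({Sum.inl v₁, Sum.inr v₂} : Finset (V₁ ⊕ V₂)).card = 2 := by
    rw [Finset.card_insert_of_notMem (by simp), Finset.card_singleton]
  rw [h3] at key
  rw [key, Finset.card_univ, Fintype.card_sum]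




end ThreeJoinAux


open ThreeJoinAux in
/-- **The 3-join of two `(2,2)`-circuits is a `(2,2)`-circuit.**
`G₁, G₂` are vertex-disjoint `(2,2)`-circuits, `v_i` is a degree-3 vertex of
`G_i` with neighbourhood `{a_i, b_i, c_i}`, and `G` is the graph on
`(V₁ - v₁) ⊕ (V₂ - v₂)` obtained by deleting `v₁, v₂` (and their incident
edges) and adding the matching `a₁a₂, b₁b₂, c₁c₂`. -/
theorem threeJoin_circuit22 {V₁ V₂ : Type*} [Fintype V₁] [Fintype V₂]
    [DecidableEq V₁] [DecidableEq V₂]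
    (G₁ : SimpleGraph V₁) (G₂ : SimpleGraph V₂)
    (h₁ : IsCircuit22 G₁) (h₂ : IsCircuit22 G₂)
    (v₁ a₁ b₁ c₁ : V₁) (v₂ a₂ b₂ c₂ : V₂)
    (hn₁ : G₁.neighborSet v₁ = {a₁, b₁, c₁})
    (hd₁ : a₁ ≠ b₁ ∧ a₁ ≠ c₁ ∧ b₁ ≠ c₁)
    (hn₂ : G₂.neighborSet v₂ = {a₂, b₂, c₂})
    (hd₂ : a₂ ≠ b₂ ∧ a₂ ≠ c₂ ∧ b₂ ≠ c₂)
    (G : SimpleGraph {w : V₁ ⊕ V₂ // w ≠ Sum.inl v₁ ∧ w ≠ Sum.inr v₂})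
    (hG : ∀ u w : {w : V₁ ⊕ V₂ // w ≠ Sum.inl v₁ ∧ w ≠ Sum.inr v₂},
      G.Adj u w ↔ joinAdj G₁ G₂ a₁ b₁ c₁ a₂ b₂ c₂ u.1 w.1) :
    IsCircuit22 G := by
  obtain ⟨hab, hac, hbc⟩ := hd₁
  obtain ⟨hab', hac', hbc'⟩ := hd₂
  have hva : G₁.Adj v₁ a₁ := by
    have : a₁ ∈ G₁.neighborSet v₁ := by rw [hn₁]; simp
    exact this
  have hvb : G₁.Adj v₁ b₁ := by
    have : b₁ ∈ G₁.neighborSet v₁ := by rw [hn₁]; simp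
    exact this
  have hvc : G₁.Adj v₁ c₁ := by
    have : c₁ ∈ G₁.neighborSet v₁ := by rw [hn₁]; simp
    exact this
  have hva' : G₂.Adj v₂ a₂ := by
    have : a₂ ∈ G₂.neighborSet v₂ := by rw [hn₂]; simp
    exact this
  have hvb' : G₂.Adj v₂ b₂ := by
    have : b₂ ∈ G₂.neighborSet v₂ := by rw [hn₂]; simp
    exact this
  have hvc' : G₂.Adj v₂ c₂ := by
    have : c₂ ∈ G₂.neighborSet v₂ := by rw [hn₂]; simp
    exact this
  have ha₁ : a₁ ≠ v₁ := hva.ne'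
  have hb₁ : b₁ ≠ v₁ := hvb.ne'
  have hc₁ : c₁ ≠ v₁ := hvc.ne'
  have ha₂ : a₂ ≠ v₂ := hva'.ne'
  have hb₂ : b₂ ≠ v₂ := hvb'.ne'
  have hc₂ : c₂ ≠ v₂ := hvc'.ne'
  constructor
  · -- edge count
    have hT := card_decomp G (⊤ : G.Subgraph)
    rw [SimpleGraph.Subgraph.edgeSet_top] at hT
    have hFL := FL_ncard G₁ G₂ G hG (⊤ : G.Subgraph)
    rw [top_left_edgeSet G₁ G₂ G hG] at hFL
    have hFR := FR_ncard G₁ G₂ G hG (⊤ : G.Subgraph)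
    rw [top_right_edgeSet G₁ G₂ G hG] at hFR
    have hFMt := top_FM_ncard G₁ G₂ G hG ha₁ hb₁ hc₁ ha₂ hb₂ hc₂ hab hac hbc
    have hstar1 := star_count G₁ hn₁ hab hac hbc
    have hstar2 := star_count G₂ hn₂ hab' hac' hbc'
    have hE1 := h₁.1
    have hE2 := h₂.1
    have hcard := card_JV v₁ v₂
    omega
  · -- sparsity
    intro H hproper hne
    have hW := verts_split G₁ G₂ G hG H
    have hF := card_decomp G H
    have hFL := FL_ncard G₁ G₂ G hG H
    have hFR := FR_ncard G₁ G₂ G hG H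
    have lemA₁ : (leftSub G₁ G₂ G hG H).edgeSet.Nonempty →
        (leftSub G₁ G₂ G hG H).edgeSet.ncard + 2 ≤
          2 * (leftSub G₁ G₂ G hG H).verts.ncard := fun hne' =>
      h₁.2 _ (Or.inr (leftSub_edgeSet_ne G₁ G₂ G hG hva H)) hne'
    have lemA₂ : (rightSub G₁ G₂ G hG H).edgeSet.Nonempty →
        (rightSub G₁ G₂ G hG H).edgeSet.ncard + 2 ≤
          2 * (rightSub G₁ G₂ G hG H).verts.ncard := fun hne' =>
      h₂.2 _ (Or.inr (rightSub_edgeSet_ne G₁ G₂ G hG hva' H)) hne'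
    have hKedge₁ := leftFull_edge_ncard G₁ G₂ G hG ha₁ hb₁ hc₁ ha₂ hb₂ hc₂ hva hvb hvc
      hab hac hbc H
    have hKedge₂ := rightFull_edge_ncard G₁ G₂ G hG ha₁ hb₁ hc₁ ha₂ hb₂ hc₂ hva' hvb' hvc'
      hab' hac' hbc' hab hac hbc H
    have hKvert₁ := leftFull_verts_ncard G₁ G₂ G hG ha₁ hb₁ hc₁ ha₂ hb₂ hc₂ hva hvb hvc H
    have hKvert₂ := rightFull_verts_ncard G₁ G₂ G hG ha₁ hb₁ hc₁ ha₂ hb₂ hc₂ hva' hvb' hvc' H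
    have lemB₁ : (FM G H).Nonempty →
        ((leftSub G₁ G₂ G hG H).edgeSet.ncard + (FM G H).ncard + 2 ≤
          2 * ((leftSub G₁ G₂ G hG H).verts.ncard + 1)) ∨
        ((leftFull G₁ G₂ G hG ha₁ hb₁ hc₁ ha₂ hb₂ hc₂ hva hvb hvc H).verts = Set.univ ∧
         (leftFull G₁ G₂ G hG ha₁ hb₁ hc₁ ha₂ hb₂ hc₂ hva hvb hvc H).edgeSet = G₁.edgeSet) := by
      intro hFMne
      by_cases hp : (leftFull G₁ G₂ G hG ha₁ hb₁ hc₁ ha₂ hb₂ hc₂ hva hvb hvc H).verts ≠ Set.univ ∨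
          (leftFull G₁ G₂ G hG ha₁ hb₁ hc₁ ha₂ hb₂ hc₂ hva hvb hvc H).edgeSet ≠ G₁.edgeSet
      · left
        have hpos : 0 < (FM G H).ncard := (Set.ncard_pos (Set.toFinite _)).2 hFMne
        have hnonempty :
            (leftFull G₁ G₂ G hG ha₁ hb₁ hc₁ ha₂ hb₂ hc₂ hva hvb hvc H).edgeSet.Nonempty := by
          apply Set.nonempty_of_ncard_ne_zero
          rw [hKedge₁]
          omega
        have := h₁.2 _ hp hnonempty
        rwa [hKedge₁, hKvert₁] at this
      · right
        push_neg at hp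
        exact hp
    have lemB₂ : (FM G H).Nonempty →
        ((rightSub G₁ G₂ G hG H).edgeSet.ncard + (FM G H).ncard + 2 ≤
          2 * ((rightSub G₁ G₂ G hG H).verts.ncard + 1)) ∨
        ((rightFull G₁ G₂ G hG ha₁ hb₁ hc₁ ha₂ hb₂ hc₂ hva' hvb' hvc' H).verts = Set.univ ∧
         (rightFull G₁ G₂ G hG ha₁ hb₁ hc₁ ha₂ hb₂ hc₂ hva' hvb' hvc' H).edgeSet = G₂.edgeSet) := by
      intro hFMne
      by_cases hp : (rightFull G₁ G₂ G hG ha₁ hb₁ hc₁ ha₂ hb₂ hc₂ hva' hvb' hvc' H).verts ≠ Set.univ ∨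
          (rightFull G₁ G₂ G hG ha₁ hb₁ hc₁ ha₂ hb₂ hc₂ hva' hvb' hvc' H).edgeSet ≠ G₂.edgeSet
      · left
        have hpos : 0 < (FM G H).ncard := (Set.ncard_pos (Set.toFinite _)).2 hFMne
        have hnonempty :
            (rightFull G₁ G₂ G hG ha₁ hb₁ hc₁ ha₂ hb₂ hc₂ hva' hvb' hvc' H).edgeSet.Nonempty := by
          apply Set.nonempty_of_ncard_ne_zero
          rw [hKedge₂]
          omega
        have := h₂.2 _ hp hnonempty
        rwa [hKedge₂, hKvert₂] at this
      · right
        push_neg at hp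
        exact hp
    have hWl : (FM G H).Nonempty → 1 ≤ (leftSub G₁ G₂ G hG H).verts.ncard ∧
        1 ≤ (rightSub G₁ G₂ G hG H).verts.ncard := by
      intro hFMne
      rcases FM_nonempty_cases G₁ G₂ G hG ha₁ hb₁ hc₁ ha₂ hb₂ hc₂ H hFMne with p | p | p
      · exact ⟨(Set.ncard_pos (Set.toFinite _)).2 ⟨a₁, jvl v₂ a₁ ha₁, p.fst_mem, rfl⟩,
          (Set.ncard_pos (Set.toFinite _)).2 ⟨a₂, jvr v₁ a₂ ha₂, p.snd_mem, rfl⟩⟩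
      · exact ⟨(Set.ncard_pos (Set.toFinite _)).2 ⟨b₁, jvl v₂ b₁ hb₁, p.fst_mem, rfl⟩,
          (Set.ncard_pos (Set.toFinite _)).2 ⟨b₂, jvr v₁ b₂ hb₂, p.snd_mem, rfl⟩⟩
      · exact ⟨(Set.ncard_pos (Set.toFinite _)).2 ⟨c₁, jvl v₂ c₁ hc₁, p.fst_mem, rfl⟩,
          (Set.ncard_pos (Set.toFinite _)).2 ⟨c₂, jvr v₁ c₂ hc₂, p.snd_mem, rfl⟩⟩
    rw [hF, hFL, hFR, hW]
    by_cases hm : (FM G H).Nonempty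
    · -- at least one matching edge
      have hm1 : 1 ≤ (FM G H).ncard := (Set.ncard_pos (Set.toFinite _)).2 hm
      have hm3 : (FM G H).ncard ≤ 3 := FM_ncard_le G₁ G₂ G hG ha₁ hb₁ hc₁ ha₂ hb₂ hc₂ H
      obtain ⟨hW1, hW2⟩ := hWl hm
      rcases lemB₁ hm with hB1 | hfull1
      · rcases lemB₂ hm with hB2 | hfull2
        · -- both proper
          by_cases h2m : 2 ≤ (FM G H).ncard
          · omega
          · -- exactly one matching edge
            by_cases hl : (leftSub G₁ G₂ G hG H).edgeSet.Nonempty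
            · have hA1 := lemA₁ hl
              by_cases hr : (rightSub G₁ G₂ G hG H).edgeSet.Nonempty
              · have hA2 := lemA₂ hr
                omega
              · have hr0 : (rightSub G₁ G₂ G hG H).edgeSet.ncard = 0 := by
                  rw [Set.not_nonempty_iff_eq_empty.1 hr, Set.ncard_empty]
                omega
            · have hl0 : (leftSub G₁ G₂ G hG H).edgeSet.ncard = 0 := by
                rw [Set.not_nonempty_iff_eq_empty.1 hl, Set.ncard_empty]
              by_cases hr : (rightSub G₁ G₂ G hG H).edgeSet.Nonempty
              · have hA2 := lemA₂ hr
                omega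
              · have hr0 : (rightSub G₁ G₂ G hG H).edgeSet.ncard = 0 := by
                  rw [Set.not_nonempty_iff_eq_empty.1 hr, Set.ncard_empty]
                omega
        · -- right side degenerate
          obtain ⟨pa, pb, pc⟩ := rightFull_full_match G₁ G₂ G hG ha₁ hb₁ hc₁ ha₂ hb₂ hc₂
            hva' hvb' hvc' hab' hac' hbc' H hfull2.2
          have hm3' : (FM G H).ncard = 3 :=
            FM_ncard_of_all G₁ G₂ G hG ha₁ hb₁ hc₁ ha₂ hb₂ hc₂ hab hac hbc H pa pb pc
          have e2 : G₂.edgeSet.ncard =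
              (rightSub G₁ G₂ G hG H).edgeSet.ncard + (FM G H).ncard := by
            rw [← hKedge₂, hfull2.2]
          have v2 : (Set.univ : Set V₂).ncard =
              (rightSub G₁ G₂ G hG H).verts.ncard + 1 := by
            rw [← hKvert₂, hfull2.1]
          rw [Set.ncard_univ, Nat.card_eq_fintype_card] at v2
          have hE2 := h₂.1
          omega
      · -- left side degenerate
        obtain ⟨pa, pb, pc⟩ := leftFull_full_match G₁ G₂ G hG ha₁ hb₁ hc₁ ha₂ hb₂ hc₂
          hva hvb hvc hab hac hbc H hfull1.2
        have hm3' : (FM G H).ncard = 3 :=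
          FM_ncard_of_all G₁ G₂ G hG ha₁ hb₁ hc₁ ha₂ hb₂ hc₂ hab hac hbc H pa pb pc
        have e1 : G₁.edgeSet.ncard =
            (leftSub G₁ G₂ G hG H).edgeSet.ncard + (FM G H).ncard := by
          rw [← hKedge₁, hfull1.2]
        have v1 : (Set.univ : Set V₁).ncard =
            (leftSub G₁ G₂ G hG H).verts.ncard + 1 := by
          rw [← hKvert₁, hfull1.1]
        rw [Set.ncard_univ, Nat.card_eq_fintype_card] at v1
        have hE1 := h₁.1
        rcases lemB₂ hm with hB2 | hfull2
        · omega
        · -- both sides degenerate: contradicts properness of H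
          exfalso
          rcases hproper with hv | he
          · apply hv
            ext u
            simp only [Set.mem_univ, iff_true]
            obtain ⟨uv, up⟩ := u
            cases uv with
            | inl x =>
              exact leftFull_full_verts G₁ G₂ G hG ha₁ hb₁ hc₁ ha₂ hb₂ hc₂ hva hvb hvc H
                hfull1.1 _ x rfl
            | inr x =>
              exact rightFull_full_verts G₁ G₂ G hG ha₁ hb₁ hc₁ ha₂ hb₂ hc₂ hva' hvb' hvc' H
                hfull2.1 _ x rfl
          · apply he
            apply subset_antisymm H.edgeSet_subset
            intro e he'
            obtain ⟨⟨u, w⟩, rfl⟩ := e.exists_rep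
            have hj := (hG u w).1 he'
            obtain ⟨uv, up⟩ := u
            obtain ⟨wv, wp⟩ := w
            cases uv with
            | inl x =>
              cases wv with
              | inl y =>
                have hadj : G₁.Adj x y := hj
                exact leftFull_full_adj G₁ G₂ G hG ha₁ hb₁ hc₁ ha₂ hb₂ hc₂ hva hvb hvc H
                  hfull1.2 _ _ x y rfl rfl hadj
              | inr y =>
                have hj' : (x = a₁ ∧ y = a₂) ∨ (x = b₁ ∧ y = b₂) ∨ (x = c₁ ∧ y = c₂) := hj
                rcases hj' with ⟨h1, h2⟩ | ⟨h1, h2⟩ | ⟨h1, h2⟩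
                · have hu : (⟨Sum.inl x, up⟩ : {w : V₁ ⊕ V₂ // w ≠ Sum.inl v₁ ∧ w ≠ Sum.inr v₂})
                      = jvl v₂ a₁ ha₁ := Subtype.ext (congrArg Sum.inl h1)
                  have hw : (⟨Sum.inr y, wp⟩ : {w : V₁ ⊕ V₂ // w ≠ Sum.inl v₁ ∧ w ≠ Sum.inr v₂})
                      = jvr v₁ a₂ ha₂ := Subtype.ext (congrArg Sum.inr h2)
                  rw [SimpleGraph.Subgraph.mem_edgeSet, hu, hw]
                  exact pa
                · have hu : (⟨Sum.inl x, up⟩ : {w : V₁ ⊕ V₂ // w ≠ Sum.inl v₁ ∧ w ≠ Sum.inr v₂})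
                      = jvl v₂ b₁ hb₁ := Subtype.ext (congrArg Sum.inl h1)
                  have hw : (⟨Sum.inr y, wp⟩ : {w : V₁ ⊕ V₂ // w ≠ Sum.inl v₁ ∧ w ≠ Sum.inr v₂})
                      = jvr v₁ b₂ hb₂ := Subtype.ext (congrArg Sum.inr h2)
                  rw [SimpleGraph.Subgraph.mem_edgeSet, hu, hw]
                  exact pb
                · have hu : (⟨Sum.inl x, up⟩ : {w : V₁ ⊕ V₂ // w ≠ Sum.inl v₁ ∧ w ≠ Sum.inr v₂})
                      = jvl v₂ c₁ hc₁ := Subtype.ext (congrArg Sum.inl h1)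
                  have hw : (⟨Sum.inr y, wp⟩ : {w : V₁ ⊕ V₂ // w ≠ Sum.inl v₁ ∧ w ≠ Sum.inr v₂})
                      = jvr v₁ c₂ hc₂ := Subtype.ext (congrArg Sum.inr h2)
                  rw [SimpleGraph.Subgraph.mem_edgeSet, hu, hw]
                  exact pc
            | inr x =>
              cases wv with
              | inl y =>
                have hj' : (y = a₁ ∧ x = a₂) ∨ (y = b₁ ∧ x = b₂) ∨ (y = c₁ ∧ x = c₂) := hj
                rcases hj' with ⟨h1, h2⟩ | ⟨h1, h2⟩ | ⟨h1, h2⟩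
                · have hu : (⟨Sum.inr x, up⟩ : {w : V₁ ⊕ V₂ // w ≠ Sum.inl v₁ ∧ w ≠ Sum.inr v₂})
                      = jvr v₁ a₂ ha₂ := Subtype.ext (congrArg Sum.inr h2)
                  have hw : (⟨Sum.inl y, wp⟩ : {w : V₁ ⊕ V₂ // w ≠ Sum.inl v₁ ∧ w ≠ Sum.inr v₂})
                      = jvl v₂ a₁ ha₁ := Subtype.ext (congrArg Sum.inl h1)
                  rw [SimpleGraph.Subgraph.mem_edgeSet, hu, hw]
                  exact pa.symm
                · have hu : (⟨Sum.inr x, up⟩ : {w : V₁ ⊕ V₂ // w ≠ Sum.inl v₁ ∧ w ≠ Sum.inr v₂})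
                      = jvr v₁ b₂ hb₂ := Subtype.ext (congrArg Sum.inr h2)
                  have hw : (⟨Sum.inl y, wp⟩ : {w : V₁ ⊕ V₂ // w ≠ Sum.inl v₁ ∧ w ≠ Sum.inr v₂})
                      = jvl v₂ b₁ hb₁ := Subtype.ext (congrArg Sum.inl h1)
                  rw [SimpleGraph.Subgraph.mem_edgeSet, hu, hw]
                  exact pb.symm
                · have hu : (⟨Sum.inr x, up⟩ : {w : V₁ ⊕ V₂ // w ≠ Sum.inl v₁ ∧ w ≠ Sum.inr v₂})
                      = jvr v₁ c₂ hc₂ := Subtype.ext (congrArg Sum.inr h2)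
                  have hw : (⟨Sum.inl y, wp⟩ : {w : V₁ ⊕ V₂ // w ≠ Sum.inl v₁ ∧ w ≠ Sum.inr v₂})
                      = jvl v₂ c₁ hc₁ := Subtype.ext (congrArg Sum.inl h1)
                  rw [SimpleGraph.Subgraph.mem_edgeSet, hu, hw]
                  exact pc.symm
              | inr y =>
                have hadj : G₂.Adj x y := hj
                exact rightFull_full_adj G₁ G₂ G hG ha₁ hb₁ hc₁ ha₂ hb₂ hc₂ hva' hvb' hvc' H
                  hfull2.2 _ _ x y rfl rfl hadj
    · -- no matching edges
      have hm0 : (FM G H).ncard = 0 := by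
        rw [Set.not_nonempty_iff_eq_empty.1 hm, Set.ncard_empty]
      have hcases : (leftSub G₁ G₂ G hG H).edgeSet.Nonempty ∨
          (rightSub G₁ G₂ G hG H).edgeSet.Nonempty := by
        obtain ⟨e, he⟩ := hne
        rcases sym2Bool (Sym2.map (fun w : JV v₁ v₂ => w.1.isLeft) e) with h | h | h
        · left
          apply Set.nonempty_of_ncard_ne_zero
          rw [← hFL]
          have : 0 < (FL G H).ncard := (Set.ncard_pos (Set.toFinite _)).2 ⟨e, he, h⟩
          omega
        · right
          apply Set.nonempty_of_ncard_ne_zero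
          rw [← hFR]
          have : 0 < (FR G H).ncard := (Set.ncard_pos (Set.toFinite _)).2 ⟨e, he, h⟩
          omega
        · exact absurd ⟨e, (⟨he, h⟩ : e ∈ FM G H)⟩ hm
      rcases hcases with hl | hr
      · have hA1 := lemA₁ hl
        by_cases hr : (rightSub G₁ G₂ G hG H).edgeSet.Nonempty
        · have hA2 := lemA₂ hr
          omega
        · have hr0 : (rightSub G₁ G₂ G hG H).edgeSet.ncard = 0 := by
            rw [Set.not_nonempty_iff_eq_empty.1 hr, Set.ncard_empty]
          omega
      · have hA2 := lemA₂ hr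
        by_cases hl : (leftSub G₁ G₂ G hG H).edgeSet.Nonempty
        · have hA1 := lemA₁ hl
          omega
        · have hl0 : (leftSub G₁ G₂ G hG H).edgeSet.ncard = 0 := by
            rw [Set.not_nonempty_iff_eq_empty.1 hl, Set.ncard_empty]
          omega
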